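/- Let G be a finite semi-extraspecial 2-group with |G : Z(G)| = 2^{2a} possessing an automorphism σ of order 2^{2a} − 1. Then Z(G) contains all involutions of G: every x ∈ G with x² = 1 lies in Z(G). -/

import Mathlib

open Subgroup Pointwise
open scoped commutatorElement

universe u

section helpers
variable {V : Type u} [Group V]

lemma sq_comm (h : ∀ x : V, x * x = 1) (a b : V) : a * b = b * a := by
  have hinv : ∀ x : V, x⁻¹ = x := fun x => inv_eq_of_mul_eq_one_right (h x)
  calc a * b = (a * b)⁻¹ := (hinv _).symm
  _ = b⁻¹ * a⁻¹ := mul_inv_rev a b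
  _ = b * a := by rw [hinv, hinv]

lemma oddDvd {m k : ℕ} (h : k ∣ m) (hm : Odd m) : Odd k := by
  obtain ⟨c, rfl⟩ := h
  exact (Nat.odd_mul.mp hm).1

def fixedPts (f : MulAut V) : Subgroup V where
  carrier := {x | f x = x}
  one_mem' := map_one f
  mul_mem' := by
    intro a b ha hb
    simp only [Set.mem_setOf_eq] at *
    rw [map_mul, ha, hb]
  inv_mem' := by
    intro a ha
    simp only [Set.mem_setOf_eq] at *
    rw [map_inv, ha]

lemma mem_fixedPts {f : MulAut V} {x : V} : x ∈ fixedPts f ↔ f x = x := Iff.rfl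

def autRes (W : Subgroup V) (α : MulAut V) (h : W.map (α : V →* V) = W) : MulAut W :=
  (α.subgroupMap W).trans (MulEquiv.subgroupCongr h)

lemma autRes_coe (W : Subgroup V) (α : MulAut V) (h : W.map (α : V →* V) = W) (x : W) :
    (autRes W α h x : V) = α (x : V) := rfl

lemma autRes_pow_coe (W : Subgroup V) (α : MulAut V) (h : W.map (α : V →* V) = W) (k : ℕ)
    (x : W) : ((autRes W α h ^ k) x : V) = (α ^ k) (x : V) := by
  induction k generalizing x with
  | zero => simp
  | succ n ih =>
    rw [pow_succ, pow_succ, MulAut.mul_apply, MulAut.mul_apply, ih, autRes_coe]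

def autQuot (W : Subgroup V) [W.Normal] (α : MulAut V) (h : W.map (α : V →* V) = W) :
    MulAut (V ⧸ W) :=
  QuotientGroup.congr W W α h

lemma autQuot_mk (W : Subgroup V) [W.Normal] (α : MulAut V) (h : W.map (α : V →* V) = W)
    (x : V) : autQuot W α h (QuotientGroup.mk x) = QuotientGroup.mk (α x) :=
  QuotientGroup.congr_mk W W α h x

lemma autQuot_pow_mk (W : Subgroup V) [W.Normal] (α : MulAut V) (h : W.map (α : V →* V) = W)
    (k : ℕ) (x : V) :
    (autQuot W α h ^ k) (QuotientGroup.mk x) = QuotientGroup.mk ((α ^ k) x) := by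
  induction k generalizing x with
  | zero => simp
  | succ n ih =>
    rw [pow_succ, pow_succ, MulAut.mul_apply, MulAut.mul_apply, autQuot_mk, ih]

end helpers

lemma lemA : ∀ (n : ℕ) (V : Type u) [Group V] [Finite V],
    Nat.card V = n → ∀ (h2 : ∀ x : V, x * x = 1) (α : MulAut V), Odd (orderOf α) →
    (Nontrivial V → orderOf α ≤ Nat.card V - 1) ∧
    (orderOf α = Nat.card V - 1 → ∀ v w : V, v ≠ 1 → w ≠ 1 →
      ∃ k : ℕ, (α ^ k) v = w) := by
  intro n
  induction n using Nat.strong_induction_on with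
  | _ n IH =>
  intro V _ _ hn h2 α hodd
  haveI : Finite (MulAut V) := Finite.of_injective (fun f => (f : V → V)) DFunLike.coe_injective
  have hm0 : 0 < orderOf α := orderOf_pos α
  -- small facts about orbits
  have horb1 : ∀ v : V, v ≠ 1 → (1 : V) ∉ MulAction.orbit (↥(zpowers α)) v := by
    rintro v hv ⟨g, hg⟩
    apply hv
    have hg' : g • v = 1 := hg
    have hg1 : g • v = g • (1 : V) := by
      rw [hg']
      exact (map_one (g : MulAut V)).symm
    exact MulAction.injective g hg1
  have horblt : ∀ v : V, v ≠ 1 → (MulAction.orbit (↥(zpowers α)) v).ncard < Nat.card V := by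
    intro v hv
    have hss : MulAction.orbit (↥(zpowers α)) v ⊂ Set.univ := by
      rw [Set.ssubset_univ_iff]
      intro hcon
      exact horb1 v hv (hcon ▸ Set.mem_univ 1)
    have := Set.ncard_lt_ncard hss Set.finite_univ
    rwa [Set.ncard_univ] at this
  -- the key dichotomy
  have key : ∀ v : V, v ≠ 1 →
      orderOf α ≤ Nat.card V - 3 ∨
        (MulAction.orbit (↥(zpowers α)) v).ncard = orderOf α := by
    intro v hv
    set O : Set V := MulAction.orbit (↥(zpowers α)) v with hO
    set W : Subgroup V := Subgroup.closure O with hWdef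
    haveI hWn : W.Normal := by
      constructor
      intro x hx g
      have hcon : g * x * g⁻¹ = x := by
        rw [sq_comm h2 g x, mul_assoc]
        simp
      rwa [hcon]
    have himg : Subgroup.map (α : V →* V) W = W := by
      rw [hWdef, MonoidHom.map_closure]
      congr 1
      have h1 : (α : V →* V) '' O =
          (⟨α, Subgroup.mem_zpowers α⟩ : ↥(zpowers α)) • O := by
        ext y
        constructor
        · rintro ⟨x, hx, rfl⟩; exact ⟨x, hx, rfl⟩
        · rintro ⟨x, hx, rfl⟩; exact ⟨x, hx, rfl⟩
      rw [h1, hO, MulAction.smul_orbit]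
    by_cases hW : W = ⊤
    · right
      haveI : (MulAction.stabilizer (↥(zpowers α)) v).Normal := Subgroup.normal_of_comm _
      have hd_index : Nat.card O = (MulAction.stabilizer (↥(zpowers α)) v).index := by
        rw [Subgroup.index_eq_card]
        exact Nat.card_congr (MulAction.orbitEquivQuotientStabilizer (↥(zpowers α)) v)
      have hdm : Nat.card O ∣ orderOf α := by
        rw [hd_index, ← Nat.card_zpowers α]
        exact Subgroup.index_dvd_card _
      set d := Nat.card O with hd
      have hfix : (α ^ d) v = v := by
        have h1 : ((⟨α, Subgroup.mem_zpowers α⟩ : ↥(zpowers α)) ^ d)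
            ∈ MulAction.stabilizer (↥(zpowers α)) v := by
          rw [hd_index]
          exact Subgroup.pow_index_mem _ _
        have h2' := (MulAction.mem_stabilizer_iff).mp h1
        have h3 : ((⟨α, Subgroup.mem_zpowers α⟩ : ↥(zpowers α)) ^ d) • v
            = (α ^ d) v := rfl
        rw [h3] at h2'
        exact h2'
      have horbfix : O ⊆ (fixedPts (α ^ d) : Set V) := by
        rintro u ⟨g, rfl⟩
        obtain ⟨k, hk⟩ := Subgroup.mem_zpowers_iff.mp g.2
        have hcomm : α ^ d * (g : MulAut V) = (g : MulAut V) * α ^ d := by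
          rw [← hk, ← zpow_natCast α d, ← zpow_add, ← zpow_add, add_comm]
        show (α ^ d) (g • v) = g • v
        show (α ^ d) ((g : MulAut V) v) = (g : MulAut V) v
        rw [← MulAut.mul_apply, hcomm, MulAut.mul_apply, hfix]
      have htot : α ^ d = 1 := by
        have hle : W ≤ fixedPts (α ^ d) := (Subgroup.closure_le _).mpr horbfix
        rw [hW] at hle
        apply MulEquiv.ext
        intro x
        exact hle (Subgroup.mem_top x)
      have hmd : orderOf α ∣ d := orderOf_dvd_of_pow_eq_one htot
      have : d = orderOf α := Nat.dvd_antisymm hdm hmd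
      rw [← this, hd, Nat.card_coe_set_eq]
    · left
      set c1 := Nat.card ↥W with hc1
      set c2 := Nat.card (V ⧸ W) with hc2
      have hcards : Nat.card V = c2 * c1 :=
        Subgroup.card_eq_card_quotient_mul_card_subgroup W
      haveI hntW : Nontrivial ↥W := by
        refine ⟨⟨⟨v, Subgroup.subset_closure (MulAction.mem_orbit_self v)⟩, 1, ?_⟩⟩
        intro hcon
        exact hv (by simpa using congrArg Subtype.val hcon)
      haveI hntQ : Nontrivial (V ⧸ W) := by
        obtain ⟨x, hx⟩ : ∃ x : V, x ∉ W := by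
          by_contra hcon
          push_neg at hcon
          exact hW ((Subgroup.eq_top_iff' W).mpr hcon)
        refine ⟨⟨QuotientGroup.mk x, 1, ?_⟩⟩
        rw [Ne, QuotientGroup.eq_one_iff]
        exact hx
      haveI : Finite (MulAut ↥W) :=
        Finite.of_injective (fun f => (f : ↥W → ↥W)) DFunLike.coe_injective
      haveI : Finite (MulAut (V ⧸ W)) :=
        Finite.of_injective (fun f => (f : V ⧸ W → V ⧸ W)) DFunLike.coe_injective
      have hc12 : 2 ≤ c1 := Finite.one_lt_card_iff_nontrivial.mpr hntW
      have hc22 : 2 ≤ c2 := Finite.one_lt_card_iff_nontrivial.mpr hntQ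
      have h2W : ∀ x : ↥W, x * x = 1 := fun x => Subtype.ext (h2 (x : V))
      have h2Q : ∀ q : V ⧸ W, q * q = 1 := by
        intro q
        induction q using QuotientGroup.induction_on with
        | _ g =>
          have : (QuotientGroup.mk g : V ⧸ W) * QuotientGroup.mk g
              = QuotientGroup.mk (g * g) := rfl
          rw [this, h2 g]
          rfl
      set αW := autRes W α himg with hαW
      set αQ := autQuot W α himg with hαQ
      have hdvd1 : orderOf αW ∣ orderOf α := by
        apply orderOf_dvd_of_pow_eq_one
        apply MulEquiv.ext; intro x
        apply Subtype.ext
        rw [autRes_pow_coe, pow_orderOf_eq_one]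
        rfl
      have hdvd2 : orderOf αQ ∣ orderOf α := by
        apply orderOf_dvd_of_pow_eq_one
        apply MulEquiv.ext; intro q
        induction q using QuotientGroup.induction_on with
        | _ g =>
          rw [autQuot_pow_mk, pow_orderOf_eq_one]
          rfl
      have hltW : c1 < n := by
        rw [← hn, hcards]
        nlinarith
      have hltQ : c2 < n := by
        rw [← hn, hcards]
        nlinarith
      have hb1 : orderOf αW ≤ c1 - 1 :=
        ((IH c1 hltW ↥W rfl h2W αW (oddDvd hdvd1 hodd)).1) hntW
      have hb2 : orderOf αQ ≤ c2 - 1 :=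
        ((IH c2 hltQ (V ⧸ W) rfl h2Q αQ (oddDvd hdvd2 hodd)).1) hntQ
      set l := Nat.lcm (orderOf αW) (orderOf αQ) with hl
      have h2l : α ^ (2 * l) = 1 := by
        apply MulEquiv.ext; intro x
        have hql : αQ ^ l = 1 := orderOf_dvd_iff_pow_eq_one.mp (Nat.dvd_lcm_right _ _)
        have hrl : αW ^ l = 1 := orderOf_dvd_iff_pow_eq_one.mp (Nat.dvd_lcm_left _ _)
        have hcx : x⁻¹ * (α ^ l) x ∈ W := by
          have h := autQuot_pow_mk W α himg l x
          rw [hql] at h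
          have h' : (QuotientGroup.mk x : V ⧸ W) = QuotientGroup.mk ((α ^ l) x) := h
          exact (QuotientGroup.eq).mp h'
        have hfixc : (α ^ l) (x⁻¹ * (α ^ l) x) = x⁻¹ * (α ^ l) x := by
          have h := autRes_pow_coe W α himg l ⟨_, hcx⟩
          rw [hrl] at h
          exact h.symm
        have hxc : (α ^ l) x = x * (x⁻¹ * (α ^ l) x) := by rw [mul_inv_cancel_left]
        show (α ^ (2 * l)) x = x
        calc (α ^ (2 * l)) x = (α ^ l) ((α ^ l) x) := by
              rw [two_mul, pow_add, MulAut.mul_apply]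
        _ = (α ^ l) x * (α ^ l) (x⁻¹ * (α ^ l) x) := by
              rw [hxc, map_mul]
              rw [← hxc]
        _ = (x * (x⁻¹ * (α ^ l) x)) * (x⁻¹ * (α ^ l) x) := by rw [hfixc, ← hxc]
        _ = x * ((x⁻¹ * (α ^ l) x) * (x⁻¹ * (α ^ l) x)) := by rw [mul_assoc]
        _ = x := by rw [h2, mul_one]
      have hdvd2l : orderOf α ∣ 2 * l := orderOf_dvd_of_pow_eq_one h2l
      have hml : orderOf α ∣ l := (hodd.coprime_two_right).dvd_of_dvd_mul_left hdvd2l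
      have hlm : l ∣ orderOf αW * orderOf αQ :=
        Nat.lcm_dvd (dvd_mul_right _ _) (dvd_mul_left _ _)
      have hpos : 0 < orderOf αW * orderOf αQ :=
        Nat.mul_pos (orderOf_pos αW) (orderOf_pos αQ)
      have hlepr : orderOf α ≤ (c1 - 1) * (c2 - 1) :=
        le_trans (Nat.le_of_dvd hpos (hml.trans hlm)) (Nat.mul_le_mul hb1 hb2)
      obtain ⟨y1, hy1⟩ := Nat.exists_eq_add_of_le hc12
      obtain ⟨y2, hy2⟩ := Nat.exists_eq_add_of_le hc22
      have harith : (c1 - 1) * (c2 - 1) + 3 ≤ c2 * c1 := by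
        rw [hy1, hy2]
        have e1 : 2 + y1 - 1 = 1 + y1 := by omega
        have e2 : 2 + y2 - 1 = 1 + y2 := by omega
        rw [e1, e2]
        nlinarith
      have : orderOf α + 3 ≤ Nat.card V := by
        rw [hcards]
        omega
      omega
  constructor
  · intro hnt
    obtain ⟨v, hv⟩ := exists_ne (1 : V)
    rcases key v hv with h | h
    · omega
    · have := horblt v hv
      omega
  · intro hmeq v w hv hw
    have hcV2 : 2 ≤ Nat.card V := Finite.one_lt_card_iff_nontrivial.mpr ⟨v, 1, hv⟩
    rcases key v hv with h | h
    · exfalso; omega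
    · have h1O := horb1 v hv
      have hwO : w ∈ MulAction.orbit (↥(zpowers α)) v := by
        by_contra hwO
        have hS : (insert (1 : V) (MulAction.orbit (↥(zpowers α)) v)).ncard
            = Nat.card V := by
          rw [Set.ncard_insert_of_notMem h1O (Set.toFinite _), h, hmeq]
          omega
        have hwS : w ∉ insert (1 : V) (MulAction.orbit (↥(zpowers α)) v) := by
          simp only [Set.mem_insert_iff, not_or]
          exact ⟨hw, hwO⟩
        have hT : (insert w (insert (1 : V) (MulAction.orbit (↥(zpowers α)) v))).ncard
            = Nat.card V + 1 := by
          rw [Set.ncard_insert_of_notMem hwS (Set.toFinite _), hS]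
        have hle := Set.ncard_le_ncard
          (Set.subset_univ (insert w (insert (1 : V) (MulAction.orbit (↥(zpowers α)) v))))
          Set.finite_univ
        rw [hT, Set.ncard_univ] at hle
        omega
      obtain ⟨g, hg⟩ := hwO
      have hgp : (g : MulAut V) ∈ Submonoid.powers α :=
        mem_powers_iff_mem_zpowers.mpr g.2
      obtain ⟨k, hk⟩ := hgp
      refine ⟨k, ?_⟩
      rw [show α ^ k = (g : MulAut V) from hk]
      exact hg



/-- A finite `p`-group `G` is extraspecial if `|Z(G)| = p` and `Z(G) = [G,G]`. -/
def IsExtraspecial (p : ℕ) (G : Type*) [Group G] : Prop :=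
  Nat.card (Subgroup.center G) = p ∧ Subgroup.center G = commutator G

/-- A finite `p`-group `G` is semi-extraspecial if `G/N` is extraspecial for every
maximal subgroup `N` of the center `Z(G)`. -/
def IsSemiExtraspecial (p : ℕ) (G : Type*) [Group G] : Prop :=
  ∀ (N : Subgroup G) [N.Normal], N ≤ Subgroup.center G →
    IsCoatom (N.subgroupOf (Subgroup.center G)) →
    IsExtraspecial p (G ⧸ N)

section extra
variable {Q : Type u} [Group Q]

lemma mul_sq_one {y z : Q} (hcomm : z * y = y * z) (hy : y * y = 1) (hz : z * z = 1) :
    (y * z) * (y * z) = 1 := by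
  calc (y * z) * (y * z) = y * ((z * y) * z) := by rw [mul_assoc, mul_assoc]
  _ = y * ((y * z) * z) := by rw [hcomm]
  _ = (y * y) * (z * z) := by rw [mul_assoc, mul_assoc]
  _ = 1 := by rw [hy, hz, mul_one]

/-- the key commutator computation -/
lemma sq_mul (p q : Q) (hc : ∀ g, g * ⁅p, q⁆ = ⁅p, q⁆ * g) :
    (p * p) * q = (⁅p, q⁆ * ⁅p, q⁆) * (q * (p * p)) := by
  set c := ⁅p, q⁆ with hcdef
  have key : p * q = c * (q * p) := by
    rw [hcdef, commutatorElement_def]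
    group
  calc (p * p) * q = p * (p * q) := mul_assoc p p q
  _ = p * (c * (q * p)) := by rw [key]
  _ = (p * c) * (q * p) := (mul_assoc _ _ _).symm
  _ = (c * p) * (q * p) := by rw [hc p]
  _ = c * ((p * q) * p) := by rw [mul_assoc, ← mul_assoc p q p]
  _ = c * ((c * (q * p)) * p) := by rw [key]
  _ = c * (c * ((q * p) * p)) := by rw [mul_assoc c (q * p) p]
  _ = (c * c) * ((q * p) * p) := (mul_assoc _ _ _).symm
  _ = (c * c) * (q * (p * p)) := by rw [mul_assoc q p p]

lemma center_sq_one [Finite Q] (h2 : Nat.card (Subgroup.center Q) = 2) :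
    ∀ z ∈ Subgroup.center Q, z * z = 1 := by
  intro z hz
  have h := pow_card_eq_one' (x := (⟨z, hz⟩ : Subgroup.center Q))
  rw [h2] at h
  have := congrArg Subtype.val h
  simpa [pow_two] using this

lemma extra_sq_central [Finite Q] (hE : IsExtraspecial 2 Q) (q : Q) :
    q * q ∈ Subgroup.center Q := by
  rw [Subgroup.mem_center_iff]
  intro g
  have hcZ : ⁅q, g⁆ ∈ Subgroup.center Q := by
    rw [hE.2, _root_.commutator_def]
    exact Subgroup.commutator_mem_commutator (Subgroup.mem_top q) (Subgroup.mem_top g)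
  have hc : ∀ y, y * ⁅q, g⁆ = ⁅q, g⁆ * y := fun y => Subgroup.mem_center_iff.mp hcZ y
  have hsq := sq_mul q g hc
  rw [center_sq_one hE.1 _ hcZ, one_mul] at hsq
  exact hsq.symm
end extra


/-- Let `G` be a finite semi-extraspecial `2`-group with `|G : Z(G)| = 2^(2a)` possessing
an automorphism of order `2^(2a) - 1`. Then every involution of `G` lies in `Z(G)`. -/
theorem stmt_16 (a : ℕ) (G : Type*) [Group G] [Finite G]
    (hpG : IsPGroup 2 G) (hses : IsSemiExtraspecial 2 G)
    (hindex : (Subgroup.center G).index = 2 ^ (2 * a))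
    (σ : MulAut G) (hσ : orderOf σ = 2 ^ (2 * a) - 1) :
    ∀ x : G, x ^ 2 = 1 → x ∈ Subgroup.center G := by
  intro x hx2
  haveI : Finite (MulAut G) :=
    Finite.of_injective (fun f => (f : G → G)) DFunLike.coe_injective
  by_cases hxZ : x ∈ Subgroup.center G
  · exact hxZ
  set Z := Subgroup.center G with hZdef
  -- a is positive
  have hapos : 0 < a := by
    rcases Nat.eq_zero_or_pos a with h0 | h
    · exfalso
      rw [h0] at hσ
      norm_num at hσ
      exact hσ (isOfFinOrder_of_finite σ)
    · exact h
  have hn_odd : Odd (2 ^ (2 * a) - 1) := by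
    refine Nat.Even.sub_odd (Nat.one_le_two_pow) ?_ odd_one
    rw [Nat.even_pow]
    exact ⟨even_two, by omega⟩
  have hGnt : Nontrivial G := ⟨⟨x, 1, fun hcon => hxZ (hcon ▸ Subgroup.one_mem Z)⟩⟩
  haveI : Fact (Nat.Prime 2) := ⟨Nat.prime_two⟩
  haveI hZnt : Nontrivial ↥Z := hpG.center_nontrivial
  -- coatoms of the subgroup lattice of Z and the associated extraspecial quotients
  have hNle : ∀ K : Subgroup ↥Z, (K.map Z.subtype) ≤ Z := fun K => Subgroup.map_subtype_le K
  have hNnormal : ∀ K : Subgroup ↥Z, (K.map Z.subtype).Normal := by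
    intro K
    constructor
    intro m hm g
    have hmZ : m ∈ Z := hNle K hm
    have hcomm : g * m = m * g := Subgroup.mem_center_iff.mp hmZ g
    have : g * m * g⁻¹ = m := by rw [hcomm, mul_assoc]; simp
    rwa [this]
  have hcoatom_cond : ∀ K : Subgroup ↥Z, IsCoatom K →
      IsCoatom ((K.map Z.subtype).subgroupOf Z) := by
    intro K hK
    have : (K.map Z.subtype).subgroupOf Z = K :=
      Subgroup.comap_map_eq_self_of_injective Z.subtype_injective K
    rwa [this]
  have hextra : ∀ K : Subgroup ↥Z, IsCoatom K → IsExtraspecial 2 (G ⧸ (K.map Z.subtype)) := by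
    intro K hK
    haveI := hNnormal K
    exact hses _ (hNle K) (hcoatom_cond K hK)
  -- the image of Z in the quotient by a coatom is the center of the quotient
  have hZmapQ : ∀ K : Subgroup ↥Z, IsCoatom K →
      Z.map (QuotientGroup.mk' (K.map Z.subtype)) = Subgroup.center (G ⧸ (K.map Z.subtype)) := by
    intro K hK
    haveI := hNnormal K
    have hle : Z.map (QuotientGroup.mk' (K.map Z.subtype))
        ≤ Subgroup.center (G ⧸ (K.map Z.subtype)) := by
      rintro q ⟨z, hzZ, rfl⟩
      rw [Subgroup.mem_center_iff]
      intro g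
      induction g using QuotientGroup.induction_on with
      | _ g =>
        show QuotientGroup.mk (g * z) = QuotientGroup.mk (z * g)
        rw [Subgroup.mem_center_iff.mp hzZ g]
    haveI hmnt : Nontrivial ↥(Z.map (QuotientGroup.mk' (K.map Z.subtype))) := by
      obtain ⟨zb, hzb⟩ : ∃ zb : ↥Z, zb ∉ K := by
        by_contra hcon
        push_neg at hcon
        exact hK.1 ((Subgroup.eq_top_iff' K).mpr hcon)
      refine ⟨⟨⟨QuotientGroup.mk (zb : G), ⟨(zb : G), zb.2, rfl⟩⟩, 1, ?_⟩⟩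
      intro hcon
      have h1 : (QuotientGroup.mk (zb : G) : G ⧸ (K.map Z.subtype)) = 1 := by
        exact congrArg Subtype.val hcon
      rw [QuotientGroup.eq_one_iff] at h1
      obtain ⟨w, hwK, hw⟩ := h1
      have : w = zb := Subtype.val_injective hw
      exact hzb (this ▸ hwK)
    apply Subgroup.eq_of_le_of_card_ge hle
    rw [(hextra K hK).1]
    exact Finite.one_lt_card_iff_nontrivial.mpr hmnt
  -- pulling back central elements of the quotient
  have hpull : ∀ (K : Subgroup ↥Z) (_ : IsCoatom K) (g : G),
      (QuotientGroup.mk g : G ⧸ (K.map Z.subtype)) ∈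
        Subgroup.center (G ⧸ (K.map Z.subtype)) → g ∈ Z := by
    intro K hK g hg
    haveI := hNnormal K
    rw [← hZmapQ K hK] at hg
    obtain ⟨z, hzZ, hz⟩ := hg
    have hz' : (QuotientGroup.mk z : G ⧸ (K.map Z.subtype)) = QuotientGroup.mk g := hz
    have : z⁻¹ * g ∈ K.map Z.subtype := (QuotientGroup.eq).mp hz'
    have hmem : z⁻¹ * g ∈ Z := hNle K this
    have : g = z * (z⁻¹ * g) := by rw [mul_inv_cancel_left]
    rw [this]
    exact Subgroup.mul_mem Z hzZ hmem
  -- fix one coatom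
  obtain ⟨K0, hK0⟩ : ∃ K : Subgroup ↥Z, IsCoatom K := by
    rcases eq_top_or_exists_le_coatom (⊥ : Subgroup ↥Z) with h | ⟨K, hK, _⟩
    · exfalso
      obtain ⟨z1, z2, hz⟩ := hZnt
      apply hz
      have h1 : z1 ∈ (⊥ : Subgroup ↥Z) := h ▸ Subgroup.mem_top z1
      have h2 : z2 ∈ (⊥ : Subgroup ↥Z) := h ▸ Subgroup.mem_top z2
      rw [Subgroup.mem_bot] at h1 h2
      rw [h1, h2]
    · exact ⟨K, hK⟩
  haveI := hNnormal K0
  -- squares are central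
  have hsq : ∀ g : G, g * g ∈ Z := by
    intro g
    apply hpull K0 hK0
    exact extra_sq_central (hextra K0 hK0) (QuotientGroup.mk g)
  -- commutators are central
  have hcommZ : ∀ g h : G, ⁅g, h⁆ ∈ Z := by
    intro g h
    apply hpull K0 hK0
    have h1 : (QuotientGroup.mk ⁅g, h⁆ : G ⧸ (K0.map Z.subtype)) =
        ⁅(QuotientGroup.mk g : G ⧸ (K0.map Z.subtype)), QuotientGroup.mk h⁆ := rfl
    rw [h1, (hextra K0 hK0).2, _root_.commutator_def]
    exact Subgroup.commutator_mem_commutator (Subgroup.mem_top _) (Subgroup.mem_top _)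
  have hCgZ : commutator G ≤ Z := by
    rw [_root_.commutator_def, Subgroup.commutator_le]
    intro g _ h _
    exact hcommZ g h
  -- Z equals the commutator subgroup
  have hZC : Z ≤ commutator G := by
    by_contra hnot
    have hKne : ((commutator G).subgroupOf Z) ≠ ⊤ := by
      rw [Ne, Subgroup.subgroupOf_eq_top]
      exact hnot
    rcases eq_top_or_exists_le_coatom ((commutator G).subgroupOf Z) with h | ⟨M, hM, hle⟩
    · exact hKne h
    haveI := hNnormal M
    have hE := hextra M hM
    have hCgN : commutator G ≤ M.map Z.subtype := by
      intro g hg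
      have hgZ : g ∈ Z := hCgZ hg
      have h1 : (⟨g, hgZ⟩ : ↥Z) ∈ (commutator G).subgroupOf Z :=
        Subgroup.mem_subgroupOf.mpr hg
      exact ⟨⟨g, hgZ⟩, hle h1, rfl⟩
    have hcq : commutator (G ⧸ (M.map Z.subtype)) = ⊥ := by
      rw [_root_.commutator_def,
        ← Subgroup.map_top_of_surjective _ (QuotientGroup.mk'_surjective (M.map Z.subtype)),
        ← Subgroup.map_commutator]
      rw [Subgroup.map_eq_bot_iff, QuotientGroup.ker_mk']
      exact le_trans (le_of_eq (commutator_def G).symm) hCgN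
    have h2 : Nat.card (Subgroup.center (G ⧸ (M.map Z.subtype))) = 2 := hE.1
    rw [hE.2, hcq] at h2
    simp [Nat.card_eq_fintype_card] at h2
  have hZeq : Z = commutator G := le_antisymm hZC hCgZ
  -- Z has exponent 2
  have hZexp : ∀ z ∈ Z, z * z = 1 := by
    have hTc : ∀ p q : G, ⁅p, q⁆ * ⁅p, q⁆ = 1 := by
      intro p q
      have hc : ∀ g, g * ⁅p, q⁆ = ⁅p, q⁆ * g := fun g =>
        Subgroup.mem_center_iff.mp (hcommZ p q) g
      have h1 := sq_mul p q hc
      have h2 : (p * p) * q = q * (p * p) :=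
        (Subgroup.mem_center_iff.mp (hsq p) q).symm
      rw [h2] at h1
      exact right_eq_mul.mp h1
    -- the subgroup of central elements of square one
    set T : Subgroup G :=
      { carrier := {g | g ∈ Z ∧ g * g = 1}
        one_mem' := ⟨Subgroup.one_mem Z, one_mul 1⟩
        mul_mem' := by
          rintro p q ⟨hpZ, hp1⟩ ⟨hqZ, hq1⟩
          refine ⟨Subgroup.mul_mem Z hpZ hqZ, ?_⟩
          have hcomm : q * p = p * q := (Subgroup.mem_center_iff.mp hqZ p).symm
          calc (p * q) * (p * q) = p * ((q * p) * q) := by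
                rw [mul_assoc, mul_assoc]
          _ = p * ((p * q) * q) := by rw [hcomm]
          _ = (p * p) * (q * q) := by rw [mul_assoc, mul_assoc]
          _ = 1 := by rw [hp1, hq1, mul_one]
        inv_mem' := by
          rintro p ⟨hpZ, hp1⟩
          refine ⟨Subgroup.inv_mem Z hpZ, ?_⟩
          rw [← mul_inv_rev, hp1, inv_one] } with hTdef
    have hZT : Z ≤ T := by
      rw [hZeq, commutator_eq_closure]
      rw [Subgroup.closure_le]
      rintro g ⟨p, q, rfl⟩
      exact ⟨hcommZ p q, hTc p q⟩
    exact fun z hz => (hZT hz).2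
  -- the induced automorphism on G / Z
  have hZmapσ : Z.map (σ : G →* G) = Z := by
    rw [Subgroup.map_equiv_eq_comap_symm]
    have hinst : Z.Characteristic := Subgroup.centerCharacteristic
    exact hinst.fixed σ.symm
  set σb := autQuot Z σ hZmapσ with hσbdef
  have hdvd : orderOf σb ∣ orderOf σ := by
    apply orderOf_dvd_of_pow_eq_one
    apply MulEquiv.ext
    intro q
    induction q using QuotientGroup.induction_on with
    | _ g =>
      rw [autQuot_pow_mk, pow_orderOf_eq_one]
      rfl
  have hrev : orderOf σ ∣ orderOf σb := by
    set o := orderOf σb with hodef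
    set τ := σ ^ o with hτdef
    have hτq : ∀ g : G, g⁻¹ * τ g ∈ Z := by
      intro g
      have h := autQuot_pow_mk Z σ hZmapσ o g
      rw [← hσbdef, pow_orderOf_eq_one] at h
      have h' : (QuotientGroup.mk g : G ⧸ Z) = QuotientGroup.mk (τ g) := h
      exact (QuotientGroup.eq).mp h'
    set φ : G →* ↥Z :=
      { toFun := fun g => ⟨g⁻¹ * τ g, hτq g⟩
        map_one' := by
          apply Subtype.ext
          simp
        map_mul' := by
          intro g h
          apply Subtype.ext
          show (g * h)⁻¹ * τ (g * h) = (g⁻¹ * τ g) * (h⁻¹ * τ h)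
          have hcent : h⁻¹ * (g⁻¹ * τ g) = (g⁻¹ * τ g) * h⁻¹ :=
            Subgroup.mem_center_iff.mp (hτq g) h⁻¹
          calc (g * h)⁻¹ * τ (g * h) = (h⁻¹ * g⁻¹) * (τ g * τ h) := by
                rw [mul_inv_rev, map_mul]
          _ = (h⁻¹ * (g⁻¹ * τ g)) * τ h := by
                rw [mul_assoc, ← mul_assoc g⁻¹ (τ g) (τ h), ← mul_assoc]
          _ = ((g⁻¹ * τ g) * h⁻¹) * τ h := by rw [hcent]
          _ = (g⁻¹ * τ g) * (h⁻¹ * τ h) := mul_assoc _ _ _ } with hφdef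
    have hφcomm : ∀ g ∈ commutator G, φ g = 1 := by
      intro g hg
      have hker : commutator G ≤ φ.ker := by
        rw [_root_.commutator_def, Subgroup.commutator_le]
        intro p _ q _
        rw [MonoidHom.mem_ker, map_commutatorElement]
        exact commutatorElement_eq_one_iff_commute.mpr
          (Subtype.ext (Subgroup.mem_center_iff.mp (φ q).2 (φ p : G)))
      exact hker hg
    have hτZ : ∀ z ∈ Z, τ z = z := by
      intro z hz
      have h1 : φ z = 1 := hφcomm z (hZeq ▸ hz)
      have h2 : z⁻¹ * τ z = 1 := congrArg Subtype.val h1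
      calc τ z = z * (z⁻¹ * τ z) := by rw [mul_inv_cancel_left]
      _ = z := by rw [h2, mul_one]
    have h2o : σ ^ (2 * o) = 1 := by
      apply MulEquiv.ext
      intro g
      show (σ ^ (2 * o)) g = g
      have hsplit : (σ ^ (2 * o)) g = τ (τ g) := by
        rw [two_mul, pow_add, ← hτdef, MulAut.mul_apply]
      rw [hsplit]
      have hgc : τ g = g * (g⁻¹ * τ g) := by rw [mul_inv_cancel_left]
      calc τ (τ g) = τ g * τ (g⁻¹ * τ g) := by
            rw [hgc, map_mul, ← hgc]
      _ = (g * (g⁻¹ * τ g)) * (g⁻¹ * τ g) := by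
            rw [hτZ _ (hτq g), ← hgc]
      _ = g * ((g⁻¹ * τ g) * (g⁻¹ * τ g)) := mul_assoc _ _ _
      _ = g := by rw [hZexp _ (hτq g), mul_one]
    have hd2 : orderOf σ ∣ 2 * o := orderOf_dvd_of_pow_eq_one h2o
    have hoddσ : Odd (orderOf σ) := hσ ▸ hn_odd
    exact (hoddσ.coprime_two_right).dvd_of_dvd_mul_left hd2
  have hor : orderOf σb = orderOf σ := Nat.dvd_antisymm hdvd hrev
  -- cardinality of the quotient
  have hcardQ : Nat.card (G ⧸ Z) = 2 ^ (2 * a) := by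
    rw [← hindex, Subgroup.index_eq_card]
  -- the quotient has exponent 2
  have h2Q : ∀ q : G ⧸ Z, q * q = 1 := by
    intro q
    induction q using QuotientGroup.induction_on with
    | _ g =>
      have h1 : (QuotientGroup.mk g : G ⧸ Z) * QuotientGroup.mk g
          = QuotientGroup.mk (g * g) := rfl
      rw [h1, QuotientGroup.eq_one_iff]
      exact hsq g
  -- apply the key lemma
  have happ := lemA (Nat.card (G ⧸ Z)) (G ⧸ Z) rfl h2Q σb
    (by rw [hor, hσ]; exact hn_odd)
  have hordeq : orderOf σb = Nat.card (G ⧸ Z) - 1 := by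
    rw [hor, hσ, hcardQ]
  have htrans := happ.2 hordeq
  have hv : (QuotientGroup.mk x : G ⧸ Z) ≠ 1 := by
    rw [Ne, QuotientGroup.eq_one_iff]
    exact hxZ
  -- every element squares to 1
  have hall : ∀ g : G, g * g = 1 := by
    intro g
    by_cases hgZ : g ∈ Z
    · exact hZexp g hgZ
    · have hw : (QuotientGroup.mk g : G ⧸ Z) ≠ 1 := by
        rw [Ne, QuotientGroup.eq_one_iff]
        exact hgZ
      obtain ⟨k, hk⟩ := htrans _ _ hv hw
      rw [autQuot_pow_mk] at hk
      have hzmem : ((σ ^ k) x)⁻¹ * g ∈ Z := (QuotientGroup.eq).mp hk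
      have hy2 : (σ ^ k) x * (σ ^ k) x = 1 := by
        rw [← map_mul]
        have : x * x = 1 := by rw [← pow_two]; exact hx2
        rw [this, map_one]
      have hgdec : g = (σ ^ k) x * (((σ ^ k) x)⁻¹ * g) := by
        rw [mul_inv_cancel_left]
      have hcomm : (((σ ^ k) x)⁻¹ * g) * ((σ ^ k) x)
          = ((σ ^ k) x) * (((σ ^ k) x)⁻¹ * g) :=
        (Subgroup.mem_center_iff.mp hzmem _).symm
      calc g * g = ((σ ^ k) x * (((σ ^ k) x)⁻¹ * g)) * ((σ ^ k) x * (((σ ^ k) x)⁻¹ * g)) := by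
            rw [← hgdec]
      _ = 1 := mul_sq_one hcomm hy2 (hZexp _ hzmem)
  exact Subgroup.mem_center_iff.mpr (fun g => sq_comm hall g x)
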